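/- Let d ≥ 2, n = 2^d, N = C(n,2), and define Y = {y^0, …, y^{n−1}} ⊆ {0,1}^N by indexing the N coordinates by the pairs (i,j) with 0 ≤ i < j ≤ n−1 and setting y^k_{(i,j)} = 1 if and only if k = i or k = j. Then there exists a threshold layer F from {0,1}^N to {0,1}^d that is injective on Y (indeed, one may take F(y^k) = i2b_d(k)). -/

import Mathlib

/-- A Boolean threshold function: there are integer weights `a` and an integer
threshold `θ` such that `f x = 1` iff `∑ i, a i * x i ≥ θ` (bits as integers 0/1). -/
def IsThresholdFun {ι : Type*} [Fintype ι] (f : (ι → Bool) → Bool) : Prop :=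
  ∃ (a : ι → ℤ) (θ : ℤ), ∀ x, f x = decide (θ ≤ ∑ i, a i * (if x i then 1 else 0))

/-- A threshold layer: each coordinate function is a Boolean threshold function. -/
def IsThresholdLayer {ι κ : Type*} [Fintype ι] (F : (ι → Bool) → (κ → Bool)) : Prop :=
  ∀ j, IsThresholdFun (fun x => F x j)

/-- The step vector `h^i[s]`: coordinate `j` is 1 iff `j ≤ i`. -/
def stepVec (s i : ℕ) : Fin s → Bool := fun j => decide (j.val ≤ i)

/-- `i2b d j`: the `d`-bit binary representation of `j`. -/
def i2b (d j : ℕ) : Fin d → Bool := fun k => j.testBit k.val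

/-- Integer dot product of a weight vector with a bit vector. -/
def dotInt {ι : Type*} [Fintype ι] (a : ι → ℤ) (x : ι → Bool) : ℤ :=
  ∑ i, a i * (if x i then 1 else 0)


lemma key_sum {n : ℕ} (hn : 1 ≤ n) (e : Fin (n.choose 2) ≃ {p : Fin n × Fin n // p.1 < p.2})
    (g : Fin n → ℤ) (k : Fin n) :
    (∑ c, (g (e c).val.1 + g (e c).val.2) *
      (if (e c).val.1 = k ∨ (e c).val.2 = k then 1 else 0)) =
    (∑ i, g i) + ((n : ℤ) - 2) * g k := by
  have h1 := Equiv.sum_comp e (fun p : {p : Fin n × Fin n // p.1 < p.2} =>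
    (g p.val.1 + g p.val.2) * (if p.val.1 = k ∨ p.val.2 = k then 1 else 0))
  rw [h1]
  rw [← Finset.sum_subtype (Finset.univ.filter (fun p : Fin n × Fin n => p.1 < p.2))
    (by simp) (fun p => (g p.1 + g p.2) * (if p.1 = k ∨ p.2 = k then 1 else 0))]
  simp only [mul_ite, mul_one, mul_zero]
  rw [← Finset.sum_filter, Finset.filter_filter]
  have h2 : ∑ p ∈ Finset.univ.filter
      (fun p : Fin n × Fin n => p.1 < p.2 ∧ (p.1 = k ∨ p.2 = k)), (g p.1 + g p.2)
      = ∑ i ∈ Finset.univ.erase k, (g i + g k) := by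
    apply Finset.sum_bij' (fun p _ => if p.1 = k then p.2 else p.1)
      (fun i _ => if i < k then (i, k) else (k, i))
    · intro p hp
      simp only [Finset.mem_filter, Finset.mem_univ, true_and] at hp
      simp only [Finset.mem_erase, Finset.mem_univ, and_true]
      rcases hp with ⟨hlt, h | h⟩
      · simp [h]; omega
      · have : p.1 ≠ k := by omega
        simp [this]
    · intro i hi
      simp only [Finset.mem_erase, Finset.mem_univ, and_true] at hi
      simp only [Finset.mem_filter, Finset.mem_univ, true_and]
      by_cases h : i < k
      · simp [h] <;> omega
      · simp [h] <;> omega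
    · intro p hp
      simp only [Finset.mem_filter, Finset.mem_univ, true_and] at hp
      rcases hp with ⟨hlt, h | h⟩
      · simp only [h, if_pos rfl]
        have : ¬ p.2 < k := by omega
        simp [this]
        exact Prod.ext h.symm rfl
      · have h1 : p.1 ≠ k := by omega
        simp only [if_neg h1]
        have : p.1 < k := by omega
        simp [this]
        exact Prod.ext rfl h.symm
    · intro i hi
      simp only [Finset.mem_erase, Finset.mem_univ, and_true] at hi
      by_cases h : i < k
      · simp [h]; omega
      · simp [h]
    · intro p hp
      simp only [Finset.mem_filter, Finset.mem_univ, true_and] at hp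
      rcases hp with ⟨hlt, h | h⟩
      · simp [h]; ring
      · have h1 : p.1 ≠ k := by omega
        simp [h1, h]
  rw [h2, Finset.sum_add_distrib, Finset.sum_const]
  rw [Finset.sum_erase_eq_sub (Finset.mem_univ k)]
  simp only [Finset.card_erase_of_mem (Finset.mem_univ k), Finset.card_univ, Fintype.card_fin,
    nsmul_eq_mul]
  push_cast [Nat.cast_sub hn]
  ring

/-- for the set `Y = {y^0, …, y^{n−1}}` of `n = 2^d` vectors of dimension
`N = C(n,2)` with `y^k_{(i,j)} = 1` iff `k ∈ {i,j}`, there is a threshold layer from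
`{0,1}^N` to `{0,1}^d` that is injective on `Y`. -/
theorem stmt_12 (d : ℕ) (hd : 2 ≤ d)
    (e : Fin ((2 ^ d).choose 2) ≃ {p : Fin (2 ^ d) × Fin (2 ^ d) // p.1 < p.2})
    (y : Fin (2 ^ d) → Fin ((2 ^ d).choose 2) → Bool)
    (hy : ∀ k c, y k c = decide ((e c).val.1 = k ∨ (e c).val.2 = k)) :
    ∃ F : (Fin ((2 ^ d).choose 2) → Bool) → (Fin d → Bool),
      IsThresholdLayer F ∧ Function.Injective (fun k => F (y k)) := by
  have hn4 : 4 ≤ 2 ^ d := by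
    calc 4 = 2 ^ 2 := rfl
    _ ≤ 2 ^ d := Nat.pow_le_pow_right (by norm_num) hd
  have hn4' : (4 : ℤ) ≤ (2 ^ d : ℕ) := by exact_mod_cast hn4
  let g : Fin d → Fin (2 ^ d) → ℤ := fun b m => if m.val.testBit b.val then 1 else 0
  let a : Fin d → Fin ((2 ^ d).choose 2) → ℤ :=
    fun b c => g b (e c).val.1 + g b (e c).val.2
  let θ : Fin d → ℤ := fun b => (∑ i, g b i) + 1
  refine ⟨fun x b => decide (θ b ≤ ∑ c, a b c * (if x c then 1 else 0)), ?_, ?_⟩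
  · intro b
    exact ⟨a b, θ b, fun x => rfl⟩
  · have heval : ∀ (k : Fin (2 ^ d)) (b : Fin d),
        decide (θ b ≤ ∑ c, a b c * (if y k c then 1 else 0)) = k.val.testBit b.val := by
      intro k b
      have hx : ∀ c, a b c * (if y k c then (1:ℤ) else 0) =
          (g b (e c).val.1 + g b (e c).val.2) *
            (if (e c).val.1 = k ∨ (e c).val.2 = k then 1 else 0) := by
        intro c
        rw [hy]
        simp only [decide_eq_true_eq]
        rfl
      have hsum : (∑ c, a b c * (if y k c then 1 else 0)) =
          (∑ i, g b i) + (((2 ^ d : ℕ) : ℤ) - 2) * g b k := by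
        rw [Finset.sum_congr rfl (fun c _ => hx c)]
        exact key_sum (by omega) e (g b) k
      rw [hsum]
      by_cases hb : k.val.testBit b.val
      · have hg1 : g b k = 1 := by simp [g, hb]
        rw [hb, hg1, decide_eq_true_eq]
        show (∑ i, g b i) + 1 ≤ _
        linarith
      · have hb' : k.val.testBit b.val = false := by simpa using hb
        have hg0 : g b k = 0 := by simp [g, hb']
        rw [hb', hg0, mul_zero, add_zero]
        rw [decide_eq_false_iff_not]
        show ¬ ((∑ i, g b i) + 1 ≤ ∑ i, g b i)
        omega
    intro k k' hkk'
    simp only at hkk'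
    have hbits : ∀ b : Fin d, k.val.testBit b.val = k'.val.testBit b.val := by
      intro b
      rw [← heval k b, ← heval k' b]
      exact congrFun hkk' b
    apply Fin.ext
    apply Nat.eq_of_testBit_eq
    intro i
    by_cases hi : i < d
    · exact hbits ⟨i, hi⟩
    · have h1 : k.val < 2 ^ i :=
        lt_of_lt_of_le k.isLt (Nat.pow_le_pow_right (by norm_num) (by omega))
      have h2 : k'.val < 2 ^ i :=
        lt_of_lt_of_le k'.isLt (Nat.pow_le_pow_right (by norm_num) (by omega))
      rw [Nat.testBit_lt_two_pow h1, Nat.testBit_lt_two_pow h2]
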